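/- Let f be a nonconstant map in C(Σ, M). Then there exists δ > 0 such that the saturation of the closed δ-ball around f, namely the set { h ∘ g_a : h ∈ C(Σ, M), d(h, f) ≤ δ, a ∈ ℂ, a ≠ 0 }, is a closed subset of the subspace of nonconstant maps in C(Σ, M). -/

import Mathlib

open OnePoint

/-- The reparametrization `g_a : Σ → Σ` of the Riemann sphere `Σ = OnePoint ℂ`
extending `z ↦ a · z` on `ℂ` and fixing the point at infinity. -/
noncomputable def gA (a : ℂ) (ha : a ≠ 0) : C(OnePoint ℂ, OnePoint ℂ) where
  toFun := OnePoint.map (fun z => a * z)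
  continuous_toFun := (Homeomorph.onePointCongr (Homeomorph.mulLeft₀ a ha)).continuous

open Filter Topology Set

lemma gA_coe (a : ℂ) (ha : a ≠ 0) (z : ℂ) :
    gA a ha (z : OnePoint ℂ) = ((a * z : ℂ) : OnePoint ℂ) := rfl

lemma gA_infty (a : ℂ) (ha : a ≠ 0) : gA a ha ∞ = ∞ := rfl

lemma gA_left_inv (a : ℂ) (ha : a ≠ 0) (w : OnePoint ℂ) :
    gA a⁻¹ (inv_ne_zero ha) (gA a ha w) = w := by
  induction w using OnePoint.rec with
  | infty => rfl
  | coe z =>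
    show ((a⁻¹ * (a * z) : ℂ) : OnePoint ℂ) = (z : OnePoint ℂ)
    rw [inv_mul_cancel_left₀ ha]

lemma gA_right_inv (a : ℂ) (ha : a ≠ 0) (w : OnePoint ℂ) :
    gA a ha (gA a⁻¹ (inv_ne_zero ha) w) = w := by
  induction w using OnePoint.rec with
  | infty => rfl
  | coe z =>
    show ((a * (a⁻¹ * z) : ℂ) : OnePoint ℂ) = (z : OnePoint ℂ)
    rw [mul_inv_cancel_left₀ ha]

/-- For a nonconstant continuous map `f : Σ → M`, there is a small closed ball around `f`
whose `ℂ*`-saturation is closed in the subspace of nonconstant maps: any nonconstant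
uniform limit of points of the saturation belongs to the saturation. -/
theorem saturated_ball_closed_in_nonconstant {M : Type*} [MetricSpace M] [CompactSpace M]
    (f : C(OnePoint ℂ, M)) (hf : ∃ x y, f x ≠ f y) :
    ∃ δ > 0,
      ∀ f₂ : C(OnePoint ℂ, M), (∃ x y, f₂ x ≠ f₂ y) →
        f₂ ∈ closure {k : C(OnePoint ℂ, M) | ∃ (h : C(OnePoint ℂ, M)) (a : ℂ) (ha : a ≠ 0),
          dist h f ≤ δ ∧ k = h.comp (gA a ha)} →
        f₂ ∈ {k : C(OnePoint ℂ, M) | ∃ (h : C(OnePoint ℂ, M)) (a : ℂ) (ha : a ≠ 0),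
          dist h f ≤ δ ∧ k = h.comp (gA a ha)} := by
  obtain ⟨x, y, hxy⟩ := hf
  set ε : ℝ := dist (f x) (f y) with hε
  have hεpos : 0 < ε := dist_pos.mpr hxy
  set δ : ℝ := ε / 6 with hδ
  have hδpos : 0 < δ := by positivity
  refine ⟨δ, hδpos, ?_⟩
  intro f₂ _ hcl
  set S : Set C(OnePoint ℂ, M) :=
    {k : C(OnePoint ℂ, M) | ∃ (h : C(OnePoint ℂ, M)) (a : ℂ) (ha : a ≠ 0),
      dist h f ≤ δ ∧ k = h.comp (gA a ha)} with hS
  -- Step 1: a "spread" lower bound for f₂.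
  have hspread : ∃ u v : OnePoint ℂ, 2 * δ < dist (f₂ u) (f₂ v) := by
    obtain ⟨k₀, hk₀S, hk₀d⟩ := Metric.mem_closure_iff.mp hcl δ hδpos
    obtain ⟨h₀, a₀, ha₀, hd₀, hkeq⟩ := hk₀S
    refine ⟨gA a₀⁻¹ (inv_ne_zero ha₀) x, gA a₀⁻¹ (inv_ne_zero ha₀) y, ?_⟩
    have e1 : k₀ (gA a₀⁻¹ (inv_ne_zero ha₀) x) = h₀ x := by
      rw [hkeq, ContinuousMap.comp_apply, gA_right_inv]
    have e2 : k₀ (gA a₀⁻¹ (inv_ne_zero ha₀) y) = h₀ y := by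
      rw [hkeq, ContinuousMap.comp_apply, gA_right_inv]
    have t1 : dist (f x) (f y) ≤ dist (f x) (h₀ x) + dist (h₀ x) (h₀ y) + dist (h₀ y) (f y) :=
      dist_triangle4 _ _ _ _
    have b1 : dist (f x) (h₀ x) ≤ δ := by
      rw [dist_comm]; exact (ContinuousMap.dist_apply_le_dist x).trans hd₀
    have b2 : dist (h₀ y) (f y) ≤ δ := (ContinuousMap.dist_apply_le_dist y).trans hd₀
    have t2 : dist (h₀ x) (h₀ y) ≤
        dist (h₀ x) (f₂ (gA a₀⁻¹ (inv_ne_zero ha₀) x)) +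
          dist (f₂ (gA a₀⁻¹ (inv_ne_zero ha₀) x)) (f₂ (gA a₀⁻¹ (inv_ne_zero ha₀) y)) +
          dist (f₂ (gA a₀⁻¹ (inv_ne_zero ha₀) y)) (h₀ y) :=
      dist_triangle4 _ _ _ _
    have c1 : dist (h₀ x) (f₂ (gA a₀⁻¹ (inv_ne_zero ha₀) x)) < δ := by
      rw [← e1, dist_comm]
      exact lt_of_le_of_lt (ContinuousMap.dist_apply_le_dist _) hk₀d
    have c2 : dist (f₂ (gA a₀⁻¹ (inv_ne_zero ha₀) y)) (h₀ y) < δ := by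
      rw [← e2]
      exact lt_of_le_of_lt (ContinuousMap.dist_apply_le_dist _) hk₀d
    have : ε = 6 * δ := by rw [hδ]; ring
    linarith
  -- Step 2: a sequence in S converging to f₂.
  obtain ⟨k, hkS, hklim⟩ := mem_closure_iff_seq_limit.mp hcl
  choose h a ha hd hk using hkS
  -- Step 3: a cluster point of the sequence (a n) in the one-point compactification.
  have hmapne : (Filter.map (fun n => ((a n : ℂ) : OnePoint ℂ)) atTop).NeBot :=
    Filter.map_neBot
  obtain ⟨p, hp⟩ :=
    exists_clusterPt_of_compactSpace (Filter.map (fun n => ((a n : ℂ) : OnePoint ℂ)) atTop)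
  have hp' : ∀ s ∈ 𝓝 p, ∃ᶠ n in atTop, ((a n : ℂ) : OnePoint ℂ) ∈ s := mapClusterPt_iff_frequently.mp hp
  set L : Filter ℕ := atTop ⊓ Filter.comap (fun n => ((a n : ℂ) : OnePoint ℂ)) (𝓝 p) with hL
  have hLne : L.NeBot := by
    rw [hL, Filter.inf_neBot_iff]
    intro s hs t ht
    obtain ⟨V, hV, hVt⟩ := Filter.mem_comap.mp ht
    obtain ⟨N, hN⟩ := Filter.mem_atTop_sets.mp hs
    obtain ⟨n, hn, hnV⟩ := Filter.frequently_atTop.mp (hp' V hV) N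
    exact ⟨n, hN n hn, hVt hnV⟩
  have hLtop : L ≤ atTop := inf_le_left
  have htp : Tendsto (fun n => ((a n : ℂ) : OnePoint ℂ)) L (𝓝 p) :=
    tendsto_comap.mono_left inf_le_right
  have hk2 : Tendsto k L (𝓝 f₂) := hklim.mono_left hLtop
  have hdist0 : Tendsto (fun n => dist f₂ (k n)) L (𝓝 0) := by
    have := (tendsto_const_nhds : Tendsto (fun _ : ℕ => f₂) L (𝓝 f₂)).dist hk2
    simpa using this
  -- A helper to derive a contradiction from "f₂ is within δ of a constant".
  have hcontra : ∀ c : M, (∀ w : OnePoint ℂ, dist (f₂ w) c ≤ δ) → False := by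
    intro c hall
    obtain ⟨u, v, huv⟩ := hspread
    have : dist (f₂ u) (f₂ v) ≤ dist (f₂ u) c + dist c (f₂ v) := dist_triangle _ _ _
    have h2 : dist c (f₂ v) ≤ δ := by rw [dist_comm]; exact hall v
    linarith [hall u]
  induction p using OnePoint.rec with
  | infty =>
    exfalso
    -- for every z ≠ 0, f₂ z is within δ of f ∞
    have hz : ∀ z : ℂ, z ≠ 0 → dist (f₂ (z : OnePoint ℂ)) (f ∞) ≤ δ := by
      intro z hz0
      have hten : Tendsto (fun n => ((a n * z : ℂ) : OnePoint ℂ)) L (𝓝 ∞) := by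
        have h1 : Tendsto (fun n => gA z hz0 ((a n : ℂ) : OnePoint ℂ)) L (𝓝 (gA z hz0 ∞)) :=
          ((gA z hz0).continuous.tendsto _).comp htp
        simpa [gA_coe, gA_infty, mul_comm] using h1
      have hften : Tendsto (fun n => dist (f ((a n * z : ℂ) : OnePoint ℂ)) (f ∞)) L (𝓝 0) := by
        have := ((f.continuous.tendsto _).comp hten).dist
          (tendsto_const_nhds : Tendsto (fun _ : ℕ => f ∞) L (𝓝 (f ∞)))
        simpa using this
      have hineq : ∀ n, dist (f₂ (z : OnePoint ℂ)) (f ∞) ≤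
          dist f₂ (k n) + δ + dist (f ((a n * z : ℂ) : OnePoint ℂ)) (f ∞) := by
        intro n
        have e1 : k n (z : OnePoint ℂ) = h n ((a n * z : ℂ) : OnePoint ℂ) := by
          rw [hk n]; rfl
        calc dist (f₂ (z : OnePoint ℂ)) (f ∞)
            ≤ dist (f₂ (z : OnePoint ℂ)) (k n (z : OnePoint ℂ)) +
              dist (k n (z : OnePoint ℂ)) (f ((a n * z : ℂ) : OnePoint ℂ)) +
              dist (f ((a n * z : ℂ) : OnePoint ℂ)) (f ∞) := dist_triangle4 _ _ _ _
          _ ≤ dist f₂ (k n) + δ + dist (f ((a n * z : ℂ) : OnePoint ℂ)) (f ∞) := by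
              have b1 : dist (f₂ (z : OnePoint ℂ)) (k n (z : OnePoint ℂ)) ≤ dist f₂ (k n) :=
                ContinuousMap.dist_apply_le_dist _
              have b2 : dist (k n (z : OnePoint ℂ)) (f ((a n * z : ℂ) : OnePoint ℂ)) ≤ δ := by
                rw [e1]; exact (ContinuousMap.dist_apply_le_dist _).trans (hd n)
              linarith
      have hlim : Tendsto (fun n => dist f₂ (k n) + δ +
          dist (f ((a n * z : ℂ) : OnePoint ℂ)) (f ∞)) L (𝓝 (0 + δ + 0)) :=
        (hdist0.add tendsto_const_nhds).add hften
      have := ge_of_tendsto' hlim hineq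
      simpa using this
    -- extend to all of the sphere by density
    have hdense : Dense (((↑) : ℂ → OnePoint ℂ) '' ({0}ᶜ)) :=
      OnePoint.denseRange_coe.dense_image OnePoint.continuous_coe (dense_compl_singleton 0)
    have hclosed : IsClosed {w : OnePoint ℂ | dist (f₂ w) (f ∞) ≤ δ} :=
      isClosed_le (f₂.continuous.dist continuous_const) continuous_const
    have hsub : (((↑) : ℂ → OnePoint ℂ) '' ({0}ᶜ)) ⊆ {w : OnePoint ℂ | dist (f₂ w) (f ∞) ≤ δ} := by
      rintro _ ⟨z, hz0, rfl⟩
      exact hz z hz0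
    have hall : ∀ w : OnePoint ℂ, dist (f₂ w) (f ∞) ≤ δ := by
      intro w
      have := (hdense.mono hsub).closure_eq
      rw [hclosed.closure_eq] at this
      exact (this ▸ Set.mem_univ w : w ∈ {w : OnePoint ℂ | dist (f₂ w) (f ∞) ≤ δ})
    exact hcontra (f ∞) hall
  | coe c =>
    have hac : Tendsto a L (𝓝 c) :=
      OnePoint.isOpenEmbedding_coe.tendsto_nhds_iff.mpr htp
    by_cases hc : c = 0
    · exfalso
      subst hc
      have hz : ∀ z : ℂ, dist (f₂ (z : OnePoint ℂ)) (f ((0 : ℂ) : OnePoint ℂ)) ≤ δ := by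
        intro z
        have hten : Tendsto (fun n => ((a n * z : ℂ) : OnePoint ℂ)) L (𝓝 ((0 : ℂ) : OnePoint ℂ)) := by
          have h1 : Tendsto (fun n => a n * z) L (𝓝 (0 * z)) := hac.mul tendsto_const_nhds
          rw [zero_mul] at h1
          exact (OnePoint.continuous_coe.tendsto _).comp h1
        have hften : Tendsto (fun n => dist (f ((a n * z : ℂ) : OnePoint ℂ))
            (f ((0 : ℂ) : OnePoint ℂ))) L (𝓝 0) := by
          have := ((f.continuous.tendsto _).comp hten).dist
            (tendsto_const_nhds : Tendsto (fun _ : ℕ => f ((0 : ℂ) : OnePoint ℂ)) L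
              (𝓝 (f ((0 : ℂ) : OnePoint ℂ))))
          simpa using this
        have hineq : ∀ n, dist (f₂ (z : OnePoint ℂ)) (f ((0 : ℂ) : OnePoint ℂ)) ≤
            dist f₂ (k n) + δ + dist (f ((a n * z : ℂ) : OnePoint ℂ)) (f ((0 : ℂ) : OnePoint ℂ)) := by
          intro n
          have e1 : k n (z : OnePoint ℂ) = h n ((a n * z : ℂ) : OnePoint ℂ) := by
            rw [hk n]; rfl
          calc dist (f₂ (z : OnePoint ℂ)) (f ((0 : ℂ) : OnePoint ℂ))
              ≤ dist (f₂ (z : OnePoint ℂ)) (k n (z : OnePoint ℂ)) +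
                dist (k n (z : OnePoint ℂ)) (f ((a n * z : ℂ) : OnePoint ℂ)) +
                dist (f ((a n * z : ℂ) : OnePoint ℂ)) (f ((0 : ℂ) : OnePoint ℂ)) :=
                dist_triangle4 _ _ _ _
            _ ≤ _ := by
                have b1 : dist (f₂ (z : OnePoint ℂ)) (k n (z : OnePoint ℂ)) ≤ dist f₂ (k n) :=
                  ContinuousMap.dist_apply_le_dist _
                have b2 : dist (k n (z : OnePoint ℂ)) (f ((a n * z : ℂ) : OnePoint ℂ)) ≤ δ := by
                  rw [e1]; exact (ContinuousMap.dist_apply_le_dist _).trans (hd n)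
                linarith
        have hlim : Tendsto (fun n => dist f₂ (k n) + δ +
            dist (f ((a n * z : ℂ) : OnePoint ℂ)) (f ((0 : ℂ) : OnePoint ℂ))) L
            (𝓝 (0 + δ + 0)) := (hdist0.add tendsto_const_nhds).add hften
        have := ge_of_tendsto' hlim hineq
        simpa using this
      have hclosed : IsClosed {w : OnePoint ℂ | dist (f₂ w) (f ((0 : ℂ) : OnePoint ℂ)) ≤ δ} :=
        isClosed_le (f₂.continuous.dist continuous_const) continuous_const
      have hsub : Set.range ((↑) : ℂ → OnePoint ℂ) ⊆
          {w : OnePoint ℂ | dist (f₂ w) (f ((0 : ℂ) : OnePoint ℂ)) ≤ δ} := by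
        rintro _ ⟨z, rfl⟩
        exact hz z
      have hall : ∀ w : OnePoint ℂ, dist (f₂ w) (f ((0 : ℂ) : OnePoint ℂ)) ≤ δ := by
        intro w
        have := (OnePoint.denseRange_coe.mono hsub).closure_eq
        rw [hclosed.closure_eq] at this
        exact (this ▸ Set.mem_univ w :
          w ∈ {w : OnePoint ℂ | dist (f₂ w) (f ((0 : ℂ) : OnePoint ℂ)) ≤ δ})
      exact hcontra (f ((0 : ℂ) : OnePoint ℂ)) hall
    · -- the main case: a n clusters at c ≠ 0
      refine ⟨f₂.comp (gA c⁻¹ (inv_ne_zero hc)), c, hc, ?_, ?_⟩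
      · rw [ContinuousMap.dist_le hδpos.le]
        intro w
        have Tw : Tendsto (fun n => gA (a n)⁻¹ (inv_ne_zero (ha n)) w) L
            (𝓝 (gA c⁻¹ (inv_ne_zero hc) w)) := by
          induction w using OnePoint.rec with
          | infty => simp only [gA_infty]; exact
              (tendsto_const_nhds : Tendsto (fun _ : ℕ => (∞ : OnePoint ℂ)) L (𝓝 ∞))
          | coe z =>
            have h1 : Tendsto (fun n => (a n)⁻¹ * z) L (𝓝 (c⁻¹ * z)) :=
              (hac.inv₀ hc).mul tendsto_const_nhds
            exact (OnePoint.continuous_coe.tendsto _).comp h1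
        have T1 : Tendsto (fun n => dist (f₂.comp (gA c⁻¹ (inv_ne_zero hc)) w)
            (f₂ (gA (a n)⁻¹ (inv_ne_zero (ha n)) w))) L (𝓝 0) := by
          have := (tendsto_const_nhds :
              Tendsto (fun _ : ℕ => f₂ (gA c⁻¹ (inv_ne_zero hc) w)) L
                (𝓝 (f₂ (gA c⁻¹ (inv_ne_zero hc) w)))).dist
            ((f₂.continuous.tendsto _).comp Tw)
          simpa using this
        have hineq : ∀ n, dist (f₂.comp (gA c⁻¹ (inv_ne_zero hc)) w) (f w) ≤
            dist (f₂.comp (gA c⁻¹ (inv_ne_zero hc)) w)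
              (f₂ (gA (a n)⁻¹ (inv_ne_zero (ha n)) w)) + dist f₂ (k n) + δ := by
          intro n
          have e1 : k n (gA (a n)⁻¹ (inv_ne_zero (ha n)) w) = h n w := by
            rw [hk n, ContinuousMap.comp_apply, gA_right_inv]
          calc dist (f₂.comp (gA c⁻¹ (inv_ne_zero hc)) w) (f w)
              ≤ dist (f₂.comp (gA c⁻¹ (inv_ne_zero hc)) w)
                  (f₂ (gA (a n)⁻¹ (inv_ne_zero (ha n)) w)) +
                dist (f₂ (gA (a n)⁻¹ (inv_ne_zero (ha n)) w))
                  (k n (gA (a n)⁻¹ (inv_ne_zero (ha n)) w)) +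
                dist (k n (gA (a n)⁻¹ (inv_ne_zero (ha n)) w)) (f w) := dist_triangle4 _ _ _ _
            _ ≤ _ := by
                have b1 : dist (f₂ (gA (a n)⁻¹ (inv_ne_zero (ha n)) w))
                    (k n (gA (a n)⁻¹ (inv_ne_zero (ha n)) w)) ≤ dist f₂ (k n) :=
                  ContinuousMap.dist_apply_le_dist _
                have b2 : dist (k n (gA (a n)⁻¹ (inv_ne_zero (ha n)) w)) (f w) ≤ δ := by
                  rw [e1]; exact (ContinuousMap.dist_apply_le_dist _).trans (hd n)
                linarith
        have hlim : Tendsto (fun n => dist (f₂.comp (gA c⁻¹ (inv_ne_zero hc)) w)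
            (f₂ (gA (a n)⁻¹ (inv_ne_zero (ha n)) w)) + dist f₂ (k n) + δ) L
            (𝓝 (0 + 0 + δ)) := (T1.add hdist0).add tendsto_const_nhds
        have := ge_of_tendsto' hlim hineq
        simpa using this
      · ext w
        simp only [ContinuousMap.comp_apply]
        rw [gA_left_inv]
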